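/- arXiv:2501.00503 — 2 statements merged into one kernel-verified Lean document; each statement's English description precedes it below -/
import Mathlib

section
/- Let φ be a nonpathological lower semicontinuous submeasure on ℕ with φ(ℕ) = ∞ and φ(F) < ∞ for every finite F (so that I = Fin(φ) is an F_σ ideal). Then for every X ∉ I there exists g : ℕ → [0,∞) with ∑_{n∈ℕ} g(n) = ∞ such that I ⊆ I_g and X ∉ I_g. Consequently, I is the intersection of a family of summable ideals; in particular every nonpathological F_σ ideal is contained in some summable ideal. -/
open Filter
open scoped ENNReal

/-- A submeasure on a set (type) `X`. -/
def IsSubmeasure {X : Type*} (φ : Set X → ℝ≥0∞) : Prop :=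
  φ ∅ = 0 ∧ (∀ A B : Set X, A ⊆ B → φ A ≤ φ B) ∧ ∀ A B : Set X, φ (A ∪ B) ≤ φ A + φ B

/-- A (finitely additive) measure on `X`. -/
def IsFAMeasure {X : Type*} (μ : Set X → ℝ≥0∞) : Prop :=
  μ ∅ = 0 ∧ ∀ A B : Set X, Disjoint A B → μ (A ∪ B) = μ A + μ B

/-- A σ-measure on `X`: a measure that is countably additive on pairwise disjoint sequences. -/
def IsSigmaMeasure {X : Type*} (μ : Set X → ℝ≥0∞) : Prop :=
  IsFAMeasure μ ∧ ∀ A : ℕ → Set X, (Pairwise fun m n => Disjoint (A m) (A n)) →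
    μ (⋃ n, A n) = ∑' n, μ (A n)

/-- `hat φ A = sup { μ A : μ a measure with μ ≤ φ pointwise }`. -/
noncomputable def hat {X : Type*} (φ : Set X → ℝ≥0∞) (A : Set X) : ℝ≥0∞ :=
  ⨆ (μ : Set X → ℝ≥0∞) (_ : IsFAMeasure μ ∧ ∀ B, μ B ≤ φ B), μ A

/-- `hatSigma φ A = sup { μ A : μ a σ-measure with μ ≤ φ pointwise }`. -/
noncomputable def hatSigma {X : Type*} (φ : Set X → ℝ≥0∞) (A : Set X) : ℝ≥0∞ :=
  ⨆ (μ : Set X → ℝ≥0∞) (_ : IsSigmaMeasure μ ∧ ∀ B, μ B ≤ φ B), μ A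

/-- Lower semicontinuity of a submeasure. -/
def IsLSC {X : Type*} (φ : Set X → ℝ≥0∞) : Prop :=
  ∀ A : Set X, φ A = ⨆ (F : Set X) (_ : F ⊆ A ∧ F.Finite), φ F

/-- The ratio used in the degree of pathology, with the conventions
`∞/∞ = 0/0 = 1`, `a/0 = ∞` and `∞/a = ∞` for positive real `a`. -/
noncomputable def pratio (a b : ℝ≥0∞) : ℝ≥0∞ :=
  if (a = 0 ∧ b = 0) ∨ (a = ⊤ ∧ b = ⊤) then 1 else a / b

/-- The degree of pathology. -/
noncomputable def degP {X : Type*} (φ : Set X → ℝ≥0∞) : ℝ≥0∞ :=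
  ⨆ A : Set X, pratio (φ A) (hat φ A)

/-- The σ-degree of pathology. -/
noncomputable def degPSigma {X : Type*} (φ : Set X → ℝ≥0∞) : ℝ≥0∞ :=
  ⨆ A : Set X, pratio (φ A) (hatSigma φ A)

/-- The Fin-degree of pathology. -/
noncomputable def degPFin {X : Type*} (φ : Set X → ℝ≥0∞) : ℝ≥0∞ :=
  ⨆ (A : Set X) (_ : A.Finite), pratio (φ A) (hat φ A)

/-- The summable ideal generated by `g : ℕ → [0,∞)`. -/
def summableIdeal (g : ℕ → ℝ) : Set (Set ℕ) :=
  {A | Summable (A.indicator g)}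

lemma fa_finset {μ : Set ℕ → ℝ≥0∞} (h : IsFAMeasure μ) (s : Finset ℕ) :
    μ ↑s = ∑ n ∈ s, μ {n} := by
  induction s using Finset.induction_on with
  | empty => simpa using h.1
  | @insert a s ha ih =>
    rw [Finset.coe_insert, Set.insert_eq, h.2 _ _ (by simpa using ha), ih,
      Finset.sum_insert ha]

lemma fa_tsum_finite {μ : Set ℕ → ℝ≥0∞} (h : IsFAMeasure μ) {S : Set ℕ} (hS : S.Finite) :
    ∑' n, S.indicator (fun n => μ {n}) n = μ S := by
  rw [tsum_eq_sum (s := hS.toFinset)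
    (fun n hn => Set.indicator_of_notMem (by simpa using hn) _)]
  rw [Finset.sum_congr rfl (fun n hn => Set.indicator_of_mem (by simpa using hn) _),
    ← fa_finset h, hS.coe_toFinset]

lemma tsum_ne_top_of_summable_toReal {H : ℕ → ℝ≥0∞} (h : ∀ n, H n ≠ ⊤)
    (hs : Summable fun n => (H n).toReal) : ∑' n, H n ≠ ⊤ := by
  have : ∑' n, H n = ENNReal.ofReal (∑' n, (H n).toReal) := by
    rw [ENNReal.ofReal_tsum_of_nonneg (fun n => ENNReal.toReal_nonneg) hs]
    exact tsum_congr fun n => (ENNReal.ofReal_toReal (h n)).symm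
  rw [this]; exact ENNReal.ofReal_ne_top

lemma ennreal_top_of_forall_two_pow_le {S : ℝ≥0∞} (h : ∀ k : ℕ, (2:ℝ≥0∞)^k ≤ S) : S = ⊤ := by
  refine ENNReal.eq_top_of_forall_nnreal_le fun r => ?_
  obtain ⟨k, hk⟩ := pow_unbounded_of_one_lt (y := (2:NNReal)) r one_lt_two
  refine le_trans ?_ (h k)
  have : ((2:NNReal)^k : ℝ≥0∞) = (2:ℝ≥0∞)^k := by push_cast; ring
  rw [← this]
  exact_mod_cast hk.le

/-- If `φ` is a nonpathological lsc submeasure on `ℕ` with `φ ℕ = ∞` and finite on finite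
sets (so `I = Fin φ` is an `F_σ` ideal), then for every `X ∉ I` there is `g` with
`∑ g = ∞`, `I ⊆ I_g` and `X ∉ I_g`; consequently `I` is an intersection of summable
ideals, and in particular is contained in some summable ideal. -/
theorem stmt15 (φ : Set ℕ → ℝ≥0∞) (hφ : IsSubmeasure φ) (hlsc : IsLSC φ)
    (hnp : ∀ A, hat φ A = φ A) (hinf : φ Set.univ = ⊤)
    (hfin : ∀ F : Set ℕ, F.Finite → φ F < ⊤) :
    (∀ X : Set ℕ, φ X = ⊤ → ∃ g : ℕ → ℝ, (∀ n, 0 ≤ g n) ∧ ¬ Summable g ∧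
      (∀ A : Set ℕ, φ A < ⊤ → A ∈ summableIdeal g) ∧ X ∉ summableIdeal g) ∧
    (∃ G : Set (ℕ → ℝ), (∀ g ∈ G, (∀ n, 0 ≤ g n) ∧ ¬ Summable g) ∧
      {A : Set ℕ | φ A < ⊤} = ⋂ g ∈ G, summableIdeal g) ∧
    (∃ g : ℕ → ℝ, (∀ n, 0 ≤ g n) ∧ ¬ Summable g ∧
      {A : Set ℕ | φ A < ⊤} ⊆ summableIdeal g) := by
  have key : ∀ X : Set ℕ, φ X = ⊤ → ∃ g : ℕ → ℝ, (∀ n, 0 ≤ g n) ∧ ¬ Summable g ∧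
      (∀ A : Set ℕ, φ A < ⊤ → A ∈ summableIdeal g) ∧ X ∉ summableIdeal g := by
    intro X hX
    have hex : ∀ k : ℕ, ∃ (F : Set ℕ) (μ : Set ℕ → ℝ≥0∞), F ⊆ X ∧ F.Finite ∧
        IsFAMeasure μ ∧ (∀ B, μ B ≤ φ B) ∧ (4:ℝ≥0∞)^k ≤ μ F := by
      intro k
      have h4 : (4:ℝ≥0∞)^k < φ X := by
        rw [hX]; exact ENNReal.pow_lt_top (by norm_num)
      rw [hlsc X, lt_iSup_iff] at h4
      obtain ⟨F, hF⟩ := h4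
      rw [lt_iSup_iff] at hF
      obtain ⟨⟨hFX, hFfin⟩, hFφ⟩ := hF
      rw [← hnp F] at hFφ
      unfold hat at hFφ
      rw [lt_iSup_iff] at hFφ
      obtain ⟨μ, hμ⟩ := hFφ
      rw [lt_iSup_iff] at hμ
      obtain ⟨⟨hμm, hμle⟩, hμF⟩ := hμ
      exact ⟨F, μ, hFX, hFfin, hμm, hμle, hμF.le⟩
    choose F μ hFX hFfin hμm hμle hμF using hex
    set w : ℕ → ℕ → ℝ≥0∞ := fun k => (F k).indicator (fun n => μ k {n}) with hw
    have hwA : ∀ (k : ℕ) (A : Set ℕ), ∑' n, A.indicator (w k) n = μ k (A ∩ F k) := by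
      intro k A
      rw [hw]
      simp only [Set.indicator_indicator]
      exact fa_tsum_finite (hμm k) ((hFfin k).inter_of_right A)
    set r : ℕ → ℝ≥0∞ := fun k => 2⁻¹ ^ k with hr
    have hrsum : ∑' k, r k = 2 := by
      rw [hr]; simp only [ENNReal.tsum_geometric, ENNReal.one_sub_inv_two, inv_inv]
    set G : ℕ → ℝ≥0∞ := fun n => ∑' k, r k * w k n with hG
    have hGA : ∀ A : Set ℕ, ∑' n, A.indicator G n = ∑' k, r k * μ k (A ∩ F k) := by
      intro A
      have h1 : ∀ n, A.indicator G n = ∑' k, r k * A.indicator (w k) n := by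
        intro n
        by_cases hn : n ∈ A <;> simp [Set.indicator_of_mem, Set.indicator_of_notMem, hn, hG]
      rw [tsum_congr h1, ENNReal.tsum_comm]
      exact tsum_congr fun k => by rw [ENNReal.tsum_mul_left, hwA]
    have hGle : ∀ A : Set ℕ, ∑' n, A.indicator G n ≤ 2 * φ A := by
      intro A
      rw [hGA]
      calc ∑' k, r k * μ k (A ∩ F k) ≤ ∑' k, r k * φ A := by
            refine ENNReal.tsum_le_tsum fun k => mul_le_mul_right ?_ _
            exact le_trans (hμle k _) (hφ.2.1 _ _ Set.inter_subset_left)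
        _ = 2 * φ A := by rw [ENNReal.tsum_mul_right, hrsum]
    have hGX : ∑' n, X.indicator G n = ⊤ := by
      refine ennreal_top_of_forall_two_pow_le fun k => ?_
      rw [hGA]
      have h24 : (2:ℝ≥0∞)^k ≤ r k * μ k (X ∩ F k) := by
        have hXF : X ∩ F k = F k := Set.inter_eq_right.mpr (hFX k)
        rw [hXF, hr]
        calc (2:ℝ≥0∞)^k = 2⁻¹^k * 4^k := by
              rw [← mul_pow]
              congr 1
              rw [show (4:ℝ≥0∞) = 2 * 2 by norm_num, ← mul_assoc,
                ENNReal.inv_mul_cancel two_ne_zero ENNReal.ofNat_ne_top, one_mul]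
            _ ≤ 2⁻¹^k * μ k (F k) := mul_le_mul_right (hμF k) _
      exact le_trans h24 (ENNReal.le_tsum k)
    have hGfin : ∀ n, G n ≠ ⊤ := by
      intro n
      have h1 : ∑' m, ({n} : Set ℕ).indicator G m = G n := by
        rw [tsum_eq_single n (fun m hm => Set.indicator_of_notMem (by simpa using hm) _)]
        exact Set.indicator_of_mem rfl _
      have := hGle {n}
      rw [h1] at this
      exact ne_top_of_le_ne_top (by
        exact ENNReal.mul_ne_top (by norm_num) (hfin _ (Set.finite_singleton n)).ne) this
    refine ⟨fun n => (G n).toReal, fun n => ENNReal.toReal_nonneg, ?_, ?_, ?_⟩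
    · intro hsum
      have hXs : Summable ((X.indicator fun n => (G n).toReal)) := hsum.indicator X
      have : X.indicator (fun n => (G n).toReal) = fun n => (X.indicator G n).toReal := by
        funext n; by_cases hn : n ∈ X <;> simp [Set.indicator_of_mem, Set.indicator_of_notMem, hn]
      rw [this] at hXs
      exact tsum_ne_top_of_summable_toReal
        (fun n => fun h => hGfin n (by
          by_cases hn : n ∈ X
          · rwa [Set.indicator_of_mem hn] at h
          · rw [Set.indicator_of_notMem hn] at h; simp at h)) hXs hGX
    · intro A hA
      have : A.indicator (fun n => (G n).toReal) = fun n => (A.indicator G n).toReal := by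
        funext n; by_cases hn : n ∈ A <;> simp [Set.indicator_of_mem, Set.indicator_of_notMem, hn]
      refine Set.mem_setOf_eq ▸ ?_
      show Summable (A.indicator fun n => (G n).toReal)
      rw [this]
      refine ENNReal.summable_toReal ?_
      exact ne_top_of_le_ne_top (ENNReal.mul_ne_top (by norm_num) hA.ne) (hGle A)
    · intro hXmem
      have hXs : Summable (X.indicator fun n => (G n).toReal) := hXmem
      have : X.indicator (fun n => (G n).toReal) = fun n => (X.indicator G n).toReal := by
        funext n; by_cases hn : n ∈ X <;> simp [Set.indicator_of_mem, Set.indicator_of_notMem, hn]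
      rw [this] at hXs
      exact tsum_ne_top_of_summable_toReal
        (fun n => fun h => hGfin n (by
          by_cases hn : n ∈ X
          · rwa [Set.indicator_of_mem hn] at h
          · rw [Set.indicator_of_notMem hn] at h; simp at h)) hXs hGX
  refine ⟨key, ?_, ?_⟩
  · refine ⟨{g | (∀ n, 0 ≤ g n) ∧ ¬ Summable g ∧ ∀ A : Set ℕ, φ A < ⊤ → A ∈ summableIdeal g},
      fun g hg => ⟨hg.1, hg.2.1⟩, ?_⟩
    ext A
    simp only [Set.mem_setOf_eq, Set.mem_iInter]
    constructor
    · intro hA g hg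
      exact hg.2.2 A hA
    · intro hA
      by_contra hA'
      have hAtop : φ A = ⊤ := by
        rcases eq_or_ne (φ A) ⊤ with h | h
        · exact h
        · exact absurd (lt_top_iff_ne_top.mpr h) hA'
      obtain ⟨g, hg1, hg2, hg3, hg4⟩ := key A hAtop
      exact hg4 (hA g ⟨hg1, hg2, hg3⟩)
  · obtain ⟨g, hg1, hg2, hg3, _⟩ := key Set.univ hinf
    exact ⟨g, hg1, hg2, fun A hA => hg3 A hA⟩
end

section
/- Let I be an F_σ ideal on ℕ (i.e., I = Fin(ψ) for some lower semicontinuous submeasure ψ with ψ(ℕ) = ∞ and ψ(F) < ∞ for finite F) which can be represented as an intersection of summable ideals. Then for every X ∉ I there exists a lower semicontinuous submeasure φ on ℕ such that Fin(φ) = I and φ̂_σ(X) = ∞. -/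
open Filter
open scoped ENNReal

/-- If `I = Fin ψ` is an `F_σ` ideal which is an intersection of summable ideals, then for
every `X ∉ I` there is an lsc submeasure `φ` with `Fin φ = I` and `φ̂_σ X = ∞`. -/
theorem stmt17 (ψ : Set ℕ → ℝ≥0∞) (hψ : IsSubmeasure ψ) (hlsc : IsLSC ψ)
    (hinf : ψ Set.univ = ⊤) (hfin : ∀ F : Set ℕ, F.Finite → ψ F < ⊤)
    (hrep : ∃ G : Set (ℕ → ℝ), (∀ g ∈ G, (∀ n, 0 ≤ g n) ∧ ¬ Summable g) ∧
      {A : Set ℕ | ψ A < ⊤} = ⋂ g ∈ G, summableIdeal g) :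
    ∀ X : Set ℕ, ψ X = ⊤ → ∃ φ : Set ℕ → ℝ≥0∞, IsSubmeasure φ ∧ IsLSC φ ∧
      {A : Set ℕ | φ A < ⊤} = {A : Set ℕ | ψ A < ⊤} ∧ hatSigma φ X = ⊤ := by
  obtain ⟨G, hG, hGrep⟩ := hrep
  intro X hX
  -- pick g ∈ G with X ∉ summableIdeal g
  have hXnot : X ∉ ⋂ g ∈ G, summableIdeal g := by
    rw [← hGrep]; simp [hX]
  obtain ⟨g, hgG, hXg⟩ : ∃ g ∈ G, ¬ Summable (X.indicator g) := by
    simpa [summableIdeal, Set.mem_iInter] using hXnot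
  obtain ⟨hg0, -⟩ := hG g hgG
  -- the weight function and the σ-measure
  set d : ℕ → ℝ≥0∞ := X.indicator (fun n => ENNReal.ofReal (g n)) with hd
  set μ : Set ℕ → ℝ≥0∞ := fun A => ∑' n, A.indicator d n with hμ
  have hμmono : ∀ A B : Set ℕ, A ⊆ B → μ A ≤ μ B := by
    intro A B hAB
    exact ENNReal.tsum_le_tsum fun n =>
      Set.indicator_le_indicator_of_subset hAB (fun _ => zero_le) n
  have hμFA : IsFAMeasure μ := by
    constructor
    · simp [hμ]
    · intro A B hAB
      simp only [hμ, Set.indicator_union_of_disjoint hAB]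
      exact ENNReal.tsum_add
  have hμsigma : IsSigmaMeasure μ := by
    refine ⟨hμFA, fun A hA => ?_⟩
    have key : ∀ n, (⋃ i, A i).indicator d n = ∑' i, (A i).indicator d n := by
      intro n
      by_cases hn : n ∈ ⋃ i, A i
      · obtain ⟨i₀, hi₀⟩ := Set.mem_iUnion.1 hn
        rw [Set.indicator_of_mem hn, tsum_eq_single i₀ ?_, Set.indicator_of_mem hi₀]
        intro j hj
        exact Set.indicator_of_notMem (fun hnj => (hA hj).ne_of_mem hnj hi₀ rfl) _
      · rw [Set.indicator_of_notMem hn]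
        symm
        refine ENNReal.summable.tsum_eq_zero_iff |>.2 fun i => ?_
        exact Set.indicator_of_notMem (fun h => hn (Set.mem_iUnion.2 ⟨i, h⟩)) _
    calc μ (⋃ i, A i) = ∑' n, ∑' i, (A i).indicator d n := by
          simp only [hμ]; exact tsum_congr key
      _ = ∑' i, ∑' n, (A i).indicator d n := ENNReal.tsum_comm
      _ = ∑' i, μ (A i) := rfl
  have hμle : ∀ A : Set ℕ, μ A ≤ ψ A + μ A := fun A => le_add_self
  -- finite F: μ F < ⊤? not needed separately
  have hμsub : ∀ A B : Set ℕ, μ (A ∪ B) ≤ μ A + μ B := by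
    intro A B
    rw [← ENNReal.tsum_add]
    refine ENNReal.tsum_le_tsum fun n => ?_
    by_cases hA : n ∈ A
    · rw [Set.indicator_of_mem (Set.mem_union_left _ hA), Set.indicator_of_mem hA]
      exact le_add_right le_rfl
    · by_cases hB : n ∈ B
      · rw [Set.indicator_of_mem (Set.mem_union_right _ hB), Set.indicator_of_mem hB]
        exact le_add_left le_rfl
      · rw [Set.indicator_of_notMem (fun h => h.elim hA hB)]
        exact zero_le
  have hμlsc : ∀ A : Set ℕ, μ A = ⨆ (F : Set ℕ) (_ : F ⊆ A ∧ F.Finite), μ F := by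
    intro A
    refine le_antisymm ?_ (iSup₂_le fun F hF => hμmono F A hF.1)
    rw [show μ A = ∑' n, A.indicator d n from rfl, ENNReal.tsum_eq_iSup_sum]
    refine iSup_le fun s => ?_
    refine le_iSup₂_of_le (↑s ∩ A) ⟨Set.inter_subset_right, (s.finite_toSet).inter_of_left A⟩ ?_
    calc ∑ n ∈ s, A.indicator d n = ∑ n ∈ s, (↑s ∩ A).indicator d n := by
          refine Finset.sum_congr rfl fun n hn => ?_
          by_cases hA : n ∈ A
          · rw [Set.indicator_of_mem hA, Set.indicator_of_mem (show n ∈ (↑s : Set ℕ) ∩ A from ⟨hn, hA⟩)]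
          · rw [Set.indicator_of_notMem hA, Set.indicator_of_notMem (fun h => hA h.2)]
      _ ≤ μ (↑s ∩ A) := ENNReal.sum_le_tsum s
  -- the submeasure φ
  set φ : Set ℕ → ℝ≥0∞ := fun A => ψ A + μ A with hφ
  have hφsub : IsSubmeasure φ := by
    refine ⟨?_, ?_, ?_⟩
    · show ψ ∅ + μ ∅ = 0
      simp [hψ.1, hμ]
    · intro A B hAB
      exact add_le_add (hψ.2.1 A B hAB) (hμmono A B hAB)
    · intro A B
      show ψ (A ∪ B) + μ (A ∪ B) ≤ (ψ A + μ A) + (ψ B + μ B)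
      calc ψ (A ∪ B) + μ (A ∪ B) ≤ (ψ A + ψ B) + (μ A + μ B) :=
            add_le_add (hψ.2.2 A B) (hμsub A B)
        _ = (ψ A + μ A) + (ψ B + μ B) := by ring
  have hφlsc : IsLSC φ := by
    intro A
    show ψ A + μ A = ⨆ (F : Set ℕ) (_ : F ⊆ A ∧ F.Finite), (ψ F + μ F)
    rw [hlsc A, hμlsc A]
    rw [iSup_subtype', iSup_subtype', iSup_subtype']
    refine ENNReal.iSup_add_iSup fun i j => ?_
    refine ⟨⟨i.1 ∪ j.1, Set.union_subset i.2.1 j.2.1, i.2.2.union j.2.2⟩, ?_⟩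
    exact add_le_add (hψ.2.1 _ _ Set.subset_union_left) (hμmono _ _ Set.subset_union_right)
  have hφfin : {A : Set ℕ | φ A < ⊤} = {A : Set ℕ | ψ A < ⊤} := by
    ext A
    simp only [Set.mem_setOf_eq, hφ]
    constructor
    · intro h
      exact lt_of_le_of_lt (le_add_right le_rfl) h
    · intro h
      have hAmem : A ∈ summableIdeal g := by
        have : A ∈ ⋂ g ∈ G, summableIdeal g := by rw [← hGrep]; exact h
        exact Set.mem_iInter₂.1 this g hgG
      have hsum : Summable (A.indicator g) := hAmem
      have hμA : μ A < ⊤ := by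
        have hle : μ A ≤ ∑' n, ENNReal.ofReal (A.indicator g n) := by
          refine ENNReal.tsum_le_tsum fun n => ?_
          by_cases hA : n ∈ A
          · rw [Set.indicator_of_mem hA, Set.indicator_of_mem hA, hd]
            exact Set.indicator_le_self _ _ n
          · rw [Set.indicator_of_notMem hA, Set.indicator_of_notMem hA]
            simp
        have : ∑' n, ENNReal.ofReal (A.indicator g n) =
            ENNReal.ofReal (∑' n, A.indicator g n) :=
          (ENNReal.ofReal_tsum_of_nonneg (Set.indicator_nonneg (fun n _ => hg0 n)) hsum).symm
        rw [this] at hle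
        exact lt_of_le_of_lt hle ENNReal.ofReal_lt_top
      exact ENNReal.add_lt_top.2 ⟨h, hμA⟩
  have hμX : μ X = ⊤ := by
    have hXd : ∀ n, X.indicator d n = ENNReal.ofReal (X.indicator g n) := by
      intro n
      by_cases hn : n ∈ X
      · rw [Set.indicator_of_mem hn, hd, Set.indicator_of_mem hn, Set.indicator_of_mem hn]
      · rw [Set.indicator_of_notMem hn, Set.indicator_of_notMem hn]; simp
    rw [show μ X = ∑' n, X.indicator d n from rfl, tsum_congr hXd]
    by_contra hne
    apply hXg
    have hind : ∀ n, 0 ≤ X.indicator g n := Set.indicator_nonneg (fun n _ => hg0 n)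
    set f : ℕ → NNReal := fun n => ⟨X.indicator g n, hind n⟩ with hf
    have hcoe : ∀ n, ENNReal.ofReal (X.indicator g n) = (f n : ℝ≥0∞) := fun n =>
      ENNReal.ofReal_eq_coe_nnreal (hind n)
    rw [tsum_congr hcoe] at hne
    have := ENNReal.tsum_coe_ne_top_iff_summable.1 hne
    have : Summable (fun n => (f n : ℝ)) := NNReal.summable_coe.2 this
    exact this
  have hhat : hatSigma φ X = ⊤ := by
    refine top_le_iff.1 ?_
    calc (⊤ : ℝ≥0∞) = μ X := hμX.symm
      _ ≤ hatSigma φ X :=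
        le_iSup₂ (f := fun ν (_ : IsSigmaMeasure ν ∧ ∀ B, ν B ≤ φ B) => ν X)
          μ ⟨hμsigma, fun B => hμle B⟩
  exact ⟨φ, hφsub, hφlsc, hφfin, hhat⟩
end
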